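/- In the candidate probability model, for each candidate c ∈ C and integer r with 0 ≤ r ≤ n, define q_c(r) = Σ_{T ⊆ V, |T| = r} ∏_{i ∈ T} p_{i,c} · ∏_{i ∈ V \ T} (1 − p_{i,c}) (the probability that AS(c) = r). Then for every committee W ⊆ C with |W| = k, the probability that W is SWM satisfies: Σ_{A} w(A)·1[W is SWM in A] = Σ_{t=0}^{n} ( ∏_{c ∈ W} (Σ_{r=t}^{n} q_c(r)) − ∏_{c ∈ W} (Σ_{r=t+1}^{n} q_c(r)) ) · ∏_{c ∈ C \ W} (Σ_{r=0}^{t} q_c(r)), where the left-hand sum ranges over all approval profiles A. -/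

import Mathlib

/-- The social welfare of committee `W` in profile `A`. -/
def socialWelfare {V C : Type*} [Fintype V] [DecidableEq C]
    (A : V → Finset C) (W : Finset C) : ℕ :=
  ∑ i : V, (W ∩ A i).card

/-- `W` is social-welfare maximizing (among committees of size `k`) in profile `A`. -/
def isSWM {V C : Type*} [Fintype V] [DecidableEq C]
    (k : ℕ) (A : V → Finset C) (W : Finset C) : Prop :=
  ∀ W' : Finset C, W'.card = k → socialWelfare A W' ≤ socialWelfare A W

open scoped Classical

/-- The probability that candidate `c` receives approval score exactly `r` in the candidate
probability model: `q_c(r) = Σ_{T ⊆ V, |T| = r} ∏_{i ∈ T} p_{i,c} ∏_{i ∈ V \ T} (1 − p_{i,c})`. -/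
noncomputable def qscore {V C : Type*} [Fintype V] [DecidableEq V]
    (p : V → C → ℝ) (c : C) (r : ℕ) : ℝ :=
  ∑ T ∈ (Finset.univ : Finset V).powersetCard r,
    (∏ i ∈ T, p i c) * ∏ i ∈ Tᶜ, (1 - p i c)

section Aux

variable {V C : Type*} [Fintype V] [DecidableEq V] [Fintype C] [DecidableEq C]

/-- The approval score of candidate `c` in profile `A`. -/
noncomputable def score (A : V → Finset C) (c : C) : ℕ :=
  (Finset.univ.filter fun i => c ∈ A i).card

lemma score_le (A : V → Finset C) (c : C) : score A c ≤ Fintype.card V := by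
  classical
  calc score A c ≤ (Finset.univ : Finset V).card := Finset.card_filter_le _ _
    _ = Fintype.card V := Finset.card_univ

lemma sw_eq_sum_score (A : V → Finset C) (W : Finset C) :
    socialWelfare A W = ∑ c ∈ W, score A c := by
  classical
  unfold socialWelfare score
  have h : ∀ i : V, (W ∩ A i).card = ∑ c ∈ W, if c ∈ A i then 1 else 0 := by
    intro i
    rw [← Finset.filter_mem_eq_inter, Finset.card_filter]
  simp_rw [h, Finset.card_filter]
  rw [Finset.sum_comm]

lemma swm_iff (k : ℕ) (A : V → Finset C) (W : Finset C) (hW : W.card = k) :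
    isSWM k A W ↔ ∀ c ∈ W, ∀ c' ∉ W, score A c' ≤ score A c := by
  classical
  constructor
  · intro h c hc c' hc'
    have hni : c' ∉ W.erase c := fun h' => hc' (Finset.mem_of_mem_erase h')
    have hW' : (insert c' (W.erase c)).card = k := by
      rw [Finset.card_insert_of_notMem hni, Finset.card_erase_of_mem hc, hW]
      have : 1 ≤ k := Nat.one_le_iff_ne_zero.mpr (by
        rintro rfl
        rw [Finset.card_eq_zero] at hW
        simp [hW] at hc)
      omega
    have hle := h _ hW'
    rw [sw_eq_sum_score, sw_eq_sum_score, Finset.sum_insert hni,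
      ← Finset.add_sum_erase W (score A) hc] at hle
    omega
  · intro h W' hW'
    rw [sw_eq_sum_score, sw_eq_sum_score]
    by_cases hsub : W \ W' = ∅
    · have hWW' : W = W' :=
        Finset.eq_of_subset_of_card_le (Finset.sdiff_eq_empty_iff_subset.mp hsub)
          (by rw [hW, hW'])
      rw [hWW']
    · have hne : (W \ W').Nonempty := Finset.nonempty_iff_ne_empty.mpr hsub
      obtain ⟨c₀, hc₀, hmin⟩ := Finset.exists_min_image (W \ W') (score A) hne
      have hcard : (W' \ W).card = (W \ W').card :=
        Finset.card_sdiff_comm (by rw [hW, hW'])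
      have h1 : ∑ c ∈ W' \ W, score A c ≤ ∑ c ∈ W \ W', score A c := by
        calc ∑ c ∈ W' \ W, score A c ≤ ∑ _c ∈ W' \ W, score A c₀ := by
              refine Finset.sum_le_sum fun c hc => ?_
              exact h c₀ (Finset.mem_sdiff.mp hc₀).1 c (Finset.mem_sdiff.mp hc).2
          _ = (W' \ W).card * score A c₀ := by rw [Finset.sum_const, smul_eq_mul]
          _ = (W \ W').card * score A c₀ := by rw [hcard]
          _ = ∑ _c ∈ W \ W', score A c₀ := by rw [Finset.sum_const, smul_eq_mul]
          _ ≤ ∑ c ∈ W \ W', score A c := Finset.sum_le_sum fun c hc => hmin c hc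
      have e1 := Finset.sum_inter_add_sum_sdiff W' W (score A)
      have e2 := Finset.sum_inter_add_sum_sdiff W W' (score A)
      rw [Finset.inter_comm] at e1
      omega

/-- The equivalence between profiles and "approval sets per candidate". -/
noncomputable def profEquiv : (V → Finset C) ≃ (C → Finset V) where
  toFun A c := Finset.univ.filter fun i => c ∈ A i
  invFun g i := Finset.univ.filter fun c => i ∈ g c
  left_inv A := by funext i; ext c; simp
  right_inv g := by funext c; ext i; simp

/-- Factorization of the profile sum across candidates. -/
lemma factor (p : V → C → ℝ) (φ : C → Finset V → ℝ) :
    ∑ A : V → Finset C,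
      (∏ i : V, ∏ c : C, (if c ∈ A i then p i c else 1 - p i c)) *
        ∏ c : C, φ c (Finset.univ.filter fun i => c ∈ A i)
    = ∏ c : C, ∑ T : Finset V,
        ((∏ i ∈ T, p i c) * ∏ i ∈ Tᶜ, (1 - p i c)) * φ c T := by
  classical
  have hRHS : ∏ c : C, ∑ T : Finset V,
        ((∏ i ∈ T, p i c) * ∏ i ∈ Tᶜ, (1 - p i c)) * φ c T
      = ∑ g : C → Finset V, ∏ c : C,
          ((∏ i ∈ g c, p i c) * ∏ i ∈ (g c)ᶜ, (1 - p i c)) * φ c (g c) := by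
    rw [← Finset.sum_prod_piFinset (Finset.univ : Finset (Finset V))
      (fun c T => ((∏ i ∈ T, p i c) * ∏ i ∈ Tᶜ, (1 - p i c)) * φ c T)]
    rw [Fintype.piFinset_univ]
  rw [hRHS]
  refine Fintype.sum_equiv profEquiv _ _ fun A => ?_
  have hA : ∀ c : C, ∏ i : V, (if c ∈ A i then p i c else 1 - p i c)
      = (∏ i ∈ (Finset.univ.filter fun i => c ∈ A i), p i c) *
        ∏ i ∈ (Finset.univ.filter fun i => c ∈ A i)ᶜ, (1 - p i c) := by
    intro c
    rw [Finset.prod_ite (fun i => p i c) (fun i => 1 - p i c)]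
    congr 1
    rw [Finset.filter_not, Finset.compl_eq_univ_sdiff]
  rw [Finset.prod_comm]
  simp_rw [hA]
  rw [← Finset.prod_mul_distrib]
  rfl

/-- Sum over all subsets, grouped by cardinality. -/
lemma cardsum (p : V → C → ℝ) (c : C) (φ : ℕ → ℝ) :
    ∑ T : Finset V, ((∏ i ∈ T, p i c) * ∏ i ∈ Tᶜ, (1 - p i c)) * φ T.card
    = ∑ r ∈ Finset.range (Fintype.card V + 1), qscore p c r * φ r := by
  classical
  have h : ∑ T : Finset V, ((∏ i ∈ T, p i c) * ∏ i ∈ Tᶜ, (1 - p i c)) * φ T.card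
      = ∑ T ∈ (Finset.univ : Finset V).powerset,
          ((∏ i ∈ T, p i c) * ∏ i ∈ Tᶜ, (1 - p i c)) * φ T.card := by
    rw [Finset.powerset_univ]
  rw [h, Finset.sum_powerset, Finset.card_univ]
  refine Finset.sum_congr rfl fun r _ => ?_
  rw [qscore, Finset.sum_mul]
  refine Finset.sum_congr rfl fun T hT => ?_
  rw [(Finset.mem_powersetCard.mp hT).2]

end Aux

/-- In the candidate probability model, the probability that a committee `W`
of size `k` is SWM equals
`Σ_{t=0}^{n} (∏_{c ∈ W} Σ_{r=t}^{n} q_c(r) − ∏_{c ∈ W} Σ_{r=t+1}^{n} q_c(r)) · ∏_{c ∉ W} Σ_{r=0}^{t} q_c(r)`. -/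
theorem swm_prob_formula_candidate_probability
    {V C : Type*} [Fintype V] [DecidableEq V] [Fintype C] [DecidableEq C]
    (k : ℕ) (hk1 : 1 ≤ k) (hkm : k ≤ Fintype.card C)
    (p : V → C → ℝ) (hp : ∀ i c, 0 ≤ p i c ∧ p i c ≤ 1)
    (W : Finset C) (hW : W.card = k) :
    ∑ A : V → Finset C,
        (∏ i : V, ∏ c : C, (if c ∈ A i then p i c else 1 - p i c)) *
          (if isSWM k A W then (1 : ℝ) else 0)
      = ∑ t ∈ Finset.range (Fintype.card V + 1),
          ((∏ c ∈ W, ∑ r ∈ Finset.Icc t (Fintype.card V), qscore p c r) -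
            ∏ c ∈ W, ∑ r ∈ Finset.Icc (t + 1) (Fintype.card V), qscore p c r) *
          ∏ c ∈ Wᶜ, ∑ r ∈ Finset.range (t + 1), qscore p c r := by
  classical
  set n := Fintype.card V with hn
  have hWne : W.Nonempty := Finset.card_pos.mp (by omega)
  -- Step 1: express the SWM indicator as a sum of threshold indicators.
  have hind : ∀ A : V → Finset C,
      (if isSWM k A W then (1 : ℝ) else 0)
      = ∑ t ∈ Finset.range (n + 1),
          ((if ∀ c ∈ W, t ≤ score A c then (1 : ℝ) else 0) -
            (if ∀ c ∈ W, t + 1 ≤ score A c then (1 : ℝ) else 0)) *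
          (if ∀ c ∈ Wᶜ, score A c ≤ t then (1 : ℝ) else 0) := by
    intro A
    by_cases hswm : isSWM k A W
    · rw [if_pos hswm]
      obtain ⟨c₀, hc₀W, hc₀min⟩ := Finset.exists_min_image W (score A) hWne
      have hchar := (swm_iff k A W hW).mp hswm
      have ht₀mem : score A c₀ ∈ Finset.range (n + 1) := by
        rw [Finset.mem_range]
        exact Nat.lt_succ_of_le (score_le A c₀)
      rw [Finset.sum_eq_single (score A c₀)]
      · have h1 : ∀ c ∈ W, score A c₀ ≤ score A c := hc₀min
        have h2 : ¬ ∀ c ∈ W, score A c₀ + 1 ≤ score A c := by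
          push_neg
          exact ⟨c₀, hc₀W, by omega⟩
        have h3 : ∀ c ∈ Wᶜ, score A c ≤ score A c₀ := fun c hc =>
          hchar c₀ hc₀W c (Finset.mem_compl.mp hc)
        rw [if_pos h1, if_neg h2, if_pos h3]
        ring
      · intro t _ hne
        rcases lt_or_gt_of_ne hne with h | h
        · rw [if_pos (fun c hc => le_trans h.le (hc₀min c hc)),
            if_pos (fun c hc => le_trans h (hc₀min c hc))]
          ring
        · have hb : ¬ ∀ c ∈ W, t ≤ score A c := by
            push_neg; exact ⟨c₀, hc₀W, h⟩
          have hb' : ¬ ∀ c ∈ W, t + 1 ≤ score A c := by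
            push_neg; exact ⟨c₀, hc₀W, by omega⟩
          rw [if_neg hb, if_neg hb']
          ring
      · intro h; exact absurd ht₀mem h
    · rw [if_neg hswm]
      symm
      refine Finset.sum_eq_zero fun t _ => ?_
      by_cases h1 : ∀ c ∈ W, t ≤ score A c
      · by_cases h3 : ∀ c ∈ Wᶜ, score A c ≤ t
        · exfalso
          apply hswm
          rw [swm_iff k A W hW]
          intro c hc c' hc'
          exact le_trans (h3 c' (Finset.mem_compl.mpr hc')) (h1 c hc)
        · rw [if_neg h3, mul_zero]
      · have h2 : ¬ ∀ c ∈ W, t + 1 ≤ score A c := fun h =>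
          h1 fun c hc => le_trans (Nat.le_succ t) (h c hc)
        rw [if_neg h1, if_neg h2, sub_self, zero_mul]
  simp_rw [hind, Finset.mul_sum]
  rw [Finset.sum_comm]
  refine Finset.sum_congr rfl fun t ht => ?_
  have htn : t ≤ n := by
    rw [Finset.mem_range] at ht; omega
  -- Step 2: for fixed t, factor the sum over profiles.
  -- general factored identity for a threshold predicate on ℕ
  have key : ∀ u : ℕ,
      ∑ A : V → Finset C,
        (∏ i : V, ∏ c : C, (if c ∈ A i then p i c else 1 - p i c)) *
          ∏ c : C, (if (c ∈ W → u ≤ score A c) ∧ (c ∉ W → score A c ≤ t)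
            then (1 : ℝ) else 0)
      = ∏ c : C, ∑ r ∈ Finset.range (n + 1),
          qscore p c r * (if (c ∈ W → u ≤ r) ∧ (c ∉ W → r ≤ t) then (1 : ℝ) else 0) := by
    intro u
    have := factor p
      (fun c T => if (c ∈ W → u ≤ T.card) ∧ (c ∉ W → T.card ≤ t) then (1 : ℝ) else 0)
    simp only [score] at this ⊢
    refine this.trans ?_
    refine Finset.prod_congr rfl fun c _ => ?_
    exact cardsum p c (fun r => if (c ∈ W → u ≤ r) ∧ (c ∉ W → r ≤ t) then (1 : ℝ) else 0)
  -- expand the difference and apply `key` twice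
  have expand : ∀ A : V → Finset C,
      (∏ i : V, ∏ c : C, (if c ∈ A i then p i c else 1 - p i c)) *
        (((if ∀ c ∈ W, t ≤ score A c then (1 : ℝ) else 0) -
          (if ∀ c ∈ W, t + 1 ≤ score A c then (1 : ℝ) else 0)) *
          (if ∀ c ∈ Wᶜ, score A c ≤ t then (1 : ℝ) else 0))
      = (∏ i : V, ∏ c : C, (if c ∈ A i then p i c else 1 - p i c)) *
          ∏ c : C, (if (c ∈ W → t ≤ score A c) ∧ (c ∉ W → score A c ≤ t)
            then (1 : ℝ) else 0)
        - (∏ i : V, ∏ c : C, (if c ∈ A i then p i c else 1 - p i c)) *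
          ∏ c : C, (if (c ∈ W → t + 1 ≤ score A c) ∧ (c ∉ W → score A c ≤ t)
            then (1 : ℝ) else 0) := by
    intro A
    have split : ∀ u : ℕ,
        (∏ c : C, if (c ∈ W → u ≤ score A c) ∧ (c ∉ W → score A c ≤ t)
          then (1 : ℝ) else 0)
        = ((if ∀ c ∈ W, u ≤ score A c then (1 : ℝ) else 0) *
            (if ∀ c ∈ Wᶜ, score A c ≤ t then (1 : ℝ) else 0)) := by
      intro u
      rw [← Finset.prod_mul_prod_compl W
        (fun c => if (c ∈ W → u ≤ score A c) ∧ (c ∉ W → score A c ≤ t)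
          then (1 : ℝ) else 0), Finset.prod_boole, Finset.prod_boole]
      congr 1
      · by_cases h : ∀ c ∈ W, u ≤ score A c
        · rw [if_pos h, if_pos fun c hc => ⟨fun _ => h c hc, fun hn => absurd hc hn⟩]
        · rw [if_neg h, if_neg]
          intro hall
          exact h fun c hc => (hall c hc).1 hc
      · by_cases h : ∀ c ∈ Wᶜ, score A c ≤ t
        · rw [if_pos fun c hc => ⟨fun hc' => absurd hc' (Finset.mem_compl.mp hc),
            fun _ => h c hc⟩, if_pos h]
        · rw [if_neg, if_neg h]
          intro hall
          exact h fun c hc => (hall c hc).2 (Finset.mem_compl.mp hc)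
    rw [split t, split (t + 1)]
    ring
  simp_rw [expand]
  rw [Finset.sum_sub_distrib, key t, key (t + 1)]
  -- Step 3: compute the per-candidate sums.
  have hprod : ∀ u : ℕ,
      (∏ c : C, ∑ r ∈ Finset.range (n + 1),
        qscore p c r * (if (c ∈ W → u ≤ r) ∧ (c ∉ W → r ≤ t) then (1 : ℝ) else 0))
      = (∏ c ∈ W, ∑ r ∈ Finset.range (n + 1),
            qscore p c r * (if u ≤ r then (1 : ℝ) else 0)) *
        ∏ c ∈ Wᶜ, ∑ r ∈ Finset.range (n + 1),
            qscore p c r * (if r ≤ t then (1 : ℝ) else 0) := by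
    intro u
    rw [← Finset.prod_mul_prod_compl W]
    congr 1
    · refine Finset.prod_congr rfl fun c hc => ?_
      refine Finset.sum_congr rfl fun r _ => ?_
      congr 1
      by_cases h : u ≤ r
      · rw [if_pos h, if_pos ⟨fun _ => h, fun hn => absurd hc hn⟩]
      · rw [if_neg h, if_neg (fun hall => h (hall.1 hc))]
    · refine Finset.prod_congr rfl fun c hc => ?_
      have hc' : c ∉ W := Finset.mem_compl.mp hc
      refine Finset.sum_congr rfl fun r _ => ?_
      congr 1
      by_cases h : r ≤ t
      · rw [if_pos h, if_pos ⟨fun hcw => absurd hcw hc', fun _ => h⟩]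
      · rw [if_neg h, if_neg (fun hall => h (hall.2 hc'))]
  rw [hprod t, hprod (t + 1)]
  have hge : ∀ (u : ℕ) (c : C),
      ∑ r ∈ Finset.range (n + 1), qscore p c r * (if u ≤ r then (1 : ℝ) else 0)
      = ∑ r ∈ Finset.Icc u n, qscore p c r := by
    intro u c
    simp_rw [mul_ite, mul_one, mul_zero]
    rw [← Finset.sum_filter]
    congr 1
    ext r
    simp only [Finset.mem_filter, Finset.mem_range, Finset.mem_Icc]
    omega
  have hle : ∀ c : C,
      ∑ r ∈ Finset.range (n + 1), qscore p c r * (if r ≤ t then (1 : ℝ) else 0)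
      = ∑ r ∈ Finset.range (t + 1), qscore p c r := by
    intro c
    simp_rw [mul_ite, mul_one, mul_zero]
    rw [← Finset.sum_filter]
    congr 1
    ext r
    simp only [Finset.mem_filter, Finset.mem_range]
    omega
  simp_rw [hge t, hge (t + 1), hle]
  ring
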